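/- For every s ∈ [0,1] and every N ∈ ℕ, inf_{P̂} sup_{P ∈ S(s)} P( TV(P, P̂(D_N(P))) ≥ s/2 ) ≥ 1/2, where the infimum is taken over all estimators P̂, i.e., over all measurable functions of the dataset D_N(P) with values in the probability distributions on Ω³, and TV denotes total variation distance TV(P,Q) = (1/2) Σ_w |P(w) − Q(w)|. -/
import Mathlib


/-!
Statement 3 (the paper's Theorem 2, total-variation version): with Ω = {0,1}, for
every s ∈ [0,1] and every N ∈ ℕ,
  inf_{P̂} sup_{P ∈ S(s)} P( TV(P, P̂(D_N(P))) ≥ s/2 ) ≥ 1/2,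
the infimum being over all estimators, i.e. all (automatically measurable, since the
sample space is finite) functions of the dataset D_N(P) with values in the probability
distributions on Ω³, and TV(P,Q) = (1/2) Σ_w |P(w) − Q(w)|.  The conditional mutual
information defining S(s) uses base-2 logarithms.
-/

open scoped Classical BigOperators

noncomputable section

/-- The binary alphabet Ω = {0,1}. -/
abbrev Om : Type := Bool

/-- Probability distributions on Ω³ (coordinates named (X, Y, Z)). -/
def Dist3 : Type := {p : Om × Om × Om → ℝ // (∀ w, 0 ≤ p w) ∧ ∑ w, p w = 1}

/-- Total variation distance `TV(P,Q) = (1/2) Σ_w |P(w) − Q(w)|`. -/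
def tvDist (p q : Om × Om × Om → ℝ) : ℝ :=
  (1 / 2) * ∑ w, |p w - q w|

/-- Conditional mutual information `I(X ; Z | Y)` (base-2 logarithms) of a joint
distribution `p` on Ω³ with coordinates ordered as (X, Y, Z). -/
def cmiXZ_Y (p : Om × Om × Om → ℝ) : ℝ :=
  ∑ x : Om, ∑ z : Om, ∑ y : Om,
    (if p (x, y, z) = 0 then 0
     else p (x, y, z) *
       Real.logb 2 ((p (x, y, z) * (∑ x' : Om, ∑ z' : Om, p (x', y, z'))) /
         ((∑ z' : Om, p (x, y, z')) * (∑ x' : Om, p (x', y, z)))))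

/-- The constrained class `S(s) = {P on Ω³ : I(X;Z|Y) ≤ s}`. -/
def Sclass (s : ℝ) : Set Dist3 := {P | cmiXZ_Y P.1 ≤ s}

/-- (X,Y)-marginal. -/
def margXY (p : Om × Om × Om → ℝ) : Om × Om → ℝ := fun w => ∑ z : Om, p (w.1, w.2, z)

/-- (Y,Z)-marginal. -/
def margYZ (p : Om × Om × Om → ℝ) : Om × Om → ℝ := fun w => ∑ x : Om, p (x, w.1, w.2)

/-- The dataset `D_N(P)`: `N` samples from the (X,Y)-marginal together with `N`
further samples from the (Y,Z)-marginal. -/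
def Dataset (N : ℕ) : Type := (Fin N → Om × Om) × (Fin N → Om × Om)

instance (N : ℕ) : Fintype (Dataset N) := by unfold Dataset; infer_instance

/-- The probability that a distribution `p` on Ω³ assigns to a realization `d` of the
dataset `D_N(p)` (all samples independent, the first `N` drawn from the (X,Y)-marginal
and the remaining `N` from the (Y,Z)-marginal). -/
def dataProb {N : ℕ} (p : Om × Om × Om → ℝ) (d : Dataset N) : ℝ :=
  (∏ i : Fin N, margXY p (d.1 i)) * (∏ i : Fin N, margYZ p (d.2 i))

/-- The probability, under the data-generating distribution `p`, of an event `E`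
depending on the dataset. -/
def dataEventProb {N : ℕ} (p : Om × Om × Om → ℝ) (E : Dataset N → Prop) : ℝ :=
  ∑ d : Dataset N, if E d then dataProb p d else 0


/-! ### Auxiliary construction for the lower bound -/

/-- The two-point family: `Y` uniform and independent of `(X,Z)`, with
`P(X = Z) = (1+σ)/2`. -/
def pSig (σ : ℝ) : Om × Om × Om → ℝ := fun w => if w.1 = w.2.2 then (1+σ)/8 else (1-σ)/8

lemma pSig_nonneg {σ : ℝ} (h : |σ| ≤ 1) (w : Om × Om × Om) : 0 ≤ pSig σ w := by
  rw [abs_le] at h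
  unfold pSig; split <;> linarith [h.1, h.2]

lemma pSig_sum (σ : ℝ) : ∑ w, pSig σ w = 1 := by
  simp [pSig, Fintype.sum_prod_type, Fintype.sum_bool]; ring

lemma pSig_margA (σ : ℝ) (y : Om) : ∑ x' : Om, ∑ z' : Om, pSig σ (x', y, z') = 1/2 := by
  simp [pSig, Fintype.sum_bool]; ring

lemma pSig_margB (σ : ℝ) (x y : Om) : ∑ z' : Om, pSig σ (x, y, z') = 1/4 := by
  cases x <;> simp [pSig, Fintype.sum_bool] <;> ring

lemma pSig_margC (σ : ℝ) (y z : Om) : ∑ x' : Om, pSig σ (x', y, z) = 1/4 := by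
  cases z <;> simp [pSig, Fintype.sum_bool] <;> ring

lemma pSig_term_eq (σ : ℝ) (x z y : Om) :
    (if pSig σ (x, y, z) = 0 then 0
     else pSig σ (x, y, z) *
       Real.logb 2 ((pSig σ (x, y, z) * (∑ x' : Om, ∑ z' : Om, pSig σ (x', y, z'))) /
         ((∑ z' : Om, pSig σ (x, y, z')) * (∑ x' : Om, pSig σ (x', y, z)))))
    = pSig σ (x, y, z) * Real.logb 2 (8 * pSig σ (x, y, z)) := by
  rw [pSig_margA, pSig_margB, pSig_margC]
  split
  · rename_i h; rw [h]; simp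
  · congr 2; ring

lemma cmi_pSig (σ : ℝ) :
    cmiXZ_Y (pSig σ) = (1+σ)/2 * Real.logb 2 (1+σ) + (1-σ)/2 * Real.logb 2 (1-σ) := by
  have e : cmiXZ_Y (pSig σ)
      = ∑ x : Om, ∑ z : Om, ∑ y : Om, pSig σ (x, y, z) * Real.logb 2 (8 * pSig σ (x, y, z)) := by
    unfold cmiXZ_Y
    exact Finset.sum_congr rfl fun x _ => Finset.sum_congr rfl fun z _ =>
      Finset.sum_congr rfl fun y _ => pSig_term_eq σ x z y
  have e1 : (8:ℝ) * ((1+σ)/8) = 1+σ := by ring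
  have e2 : (8:ℝ) * ((1-σ)/8) = 1-σ := by ring
  rw [e]
  simp [pSig, Fintype.sum_bool, e1, e2]
  ring

lemma key_ineq {t : ℝ} (h0 : 0 ≤ t) (h1 : t ≤ 1) :
    (1+t)/2 * Real.logb 2 (1+t) + (1-t)/2 * Real.logb 2 (1-t) ≤ t := by
  have hlog2 : 0 < Real.log 2 := Real.log_pos (by norm_num)
  have hφ := Real.convexOn_mul_log
  have hsum : (1 - t) + t = 1 := by ring
  have hA := hφ.2 (Set.mem_Ici.2 (by norm_num : (0:ℝ) ≤ 1))
    (Set.mem_Ici.2 (by norm_num : (0:ℝ) ≤ 2)) (by linarith) h0 hsum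
  have hB := hφ.2 (Set.mem_Ici.2 (by norm_num : (0:ℝ) ≤ 1))
    (Set.mem_Ici.2 (le_refl (0:ℝ))) (by linarith) h0 hsum
  simp only [smul_eq_mul, mul_one, mul_zero, add_zero, Real.log_one, Real.log_zero] at hA hB
  have eA : 1 - t + t * 2 = 1 + t := by ring
  rw [eA] at hA
  have goal_eq : (1+t)/2 * Real.logb 2 (1+t) + (1-t)/2 * Real.logb 2 (1-t)
      = ((1+t) * Real.log (1+t) + (1-t) * Real.log (1-t)) / (2 * Real.log 2) := by
    simp only [Real.logb]
    field_simp
  rw [goal_eq, div_le_iff₀ (by positivity)]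
  nlinarith [hA, hB]

lemma tv_symm (p q : Om × Om × Om → ℝ) : tvDist p q = tvDist q p := by
  simp [tvDist, abs_sub_comm]

lemma tv_triangle (p q r : Om × Om × Om → ℝ) : tvDist p r ≤ tvDist p q + tvDist q r := by
  have h : ∑ w, |p w - r w| ≤ ∑ w, (|p w - q w| + |q w - r w|) :=
    Finset.sum_le_sum fun w _ => abs_sub_le _ _ _
  rw [Finset.sum_add_distrib] at h
  unfold tvDist; linarith

lemma tv_pm {s : ℝ} (hs : 0 ≤ s) : tvDist (pSig s) (pSig (-s)) = s := by
  have d1 : |(1+s)/8 - (1+ -s)/8| = s/4 := by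
    have h : (1+s)/8 - (1+ -s)/8 = s/4 := by ring
    rw [h, abs_of_nonneg (by linarith)]
  have d2 : |(1-s)/8 - (1+s)/8| = s/4 := by
    have h : (1-s)/8 - (1+s)/8 = -(s/4) := by ring
    rw [h, abs_neg, abs_of_nonneg (by linarith)]
  simp only [tvDist, pSig, Fintype.sum_prod_type, Fintype.sum_bool]
  norm_num
  rw [d1, d2]
  ring

lemma margXY_pSig (σ : ℝ) : margXY (pSig σ) = fun _ => 1/4 := by
  funext v; exact pSig_margB σ v.1 v.2

lemma margYZ_pSig (σ : ℝ) : margYZ (pSig σ) = fun _ => 1/4 := by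
  funext v; exact pSig_margC σ v.1 v.2

lemma dataProb_pSig {N : ℕ} (σ : ℝ) (d : Dataset N) :
    dataProb (pSig σ) d = (1/4 : ℝ)^N * (1/4)^N := by
  simp [dataProb, margXY_pSig, margYZ_pSig]

lemma card_dataset (N : ℕ) : (Fintype.card (Dataset N) : ℝ) = 4^N * 4^N := by
  have : Fintype.card (Dataset N) = 4^N * 4^N := by
    show Fintype.card ((Fin N → Om × Om) × (Fin N → Om × Om)) = 4^N * 4^N
    simp [Fintype.card_prod, Fintype.card_fun]
  rw [this]; push_cast; ring

lemma sum_dataProb_pSig {N : ℕ} (σ : ℝ) : ∑ d : Dataset N, dataProb (pSig σ) d = 1 := by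
  rw [Finset.sum_congr rfl (fun d _ => dataProb_pSig σ d), Finset.sum_const,
    Finset.card_univ, nsmul_eq_mul, card_dataset]
  rw [show ((4:ℝ)^N * 4^N * ((1/4)^N * (1/4)^N)) = ((4 * (1/4) : ℝ))^N * (4*(1/4):ℝ)^N by
    rw [mul_pow (4:ℝ) (1/4) N]; ring]
  norm_num

lemma sum_margXY (p : Om × Om × Om → ℝ) : ∑ v : Om × Om, margXY p v = ∑ w, p w := by
  simp [margXY, Fintype.sum_prod_type]

lemma sum_margYZ (p : Om × Om × Om → ℝ) : ∑ v : Om × Om, margYZ p v = ∑ w, p w := by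
  simp only [margYZ, Fintype.sum_prod_type, Fintype.sum_bool]
  ring

lemma marg_bounds (p : Om × Om × Om → ℝ) (hp : ∀ w, 0 ≤ p w) (hs : ∑ w, p w = 1) (v : Om × Om) :
    0 ≤ margXY p v ∧ margXY p v ≤ 1 ∧ 0 ≤ margYZ p v ∧ margYZ p v ≤ 1 := by
  have h1 : 0 ≤ margXY p v := Finset.sum_nonneg fun z _ => hp _
  have h2 : 0 ≤ margYZ p v := Finset.sum_nonneg fun x _ => hp _
  refine ⟨h1, ?_, h2, ?_⟩
  · have := Finset.single_le_sum (f := margXY p)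
      (fun u _ => Finset.sum_nonneg fun z _ => hp _) (Finset.mem_univ v)
    rw [sum_margXY, hs] at this; exact this
  · have := Finset.single_le_sum (f := margYZ p)
      (fun u _ => Finset.sum_nonneg fun x _ => hp _) (Finset.mem_univ v)
    rw [sum_margYZ, hs] at this; exact this

lemma dataProb_bounds {N : ℕ} (p : Om × Om × Om → ℝ) (hp : ∀ w, 0 ≤ p w)
    (hs : ∑ w, p w = 1) (d : Dataset N) : 0 ≤ dataProb p d ∧ dataProb p d ≤ 1 := by
  have hXYn : ∀ i : Fin N, 0 ≤ margXY p (d.1 i) := fun i => (marg_bounds p hp hs _).1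
  have hYZn : ∀ i : Fin N, 0 ≤ margYZ p (d.2 i) := fun i => (marg_bounds p hp hs _).2.2.1
  have p1 : 0 ≤ ∏ i : Fin N, margXY p (d.1 i) := Finset.prod_nonneg fun i _ => hXYn i
  have p2 : 0 ≤ ∏ i : Fin N, margYZ p (d.2 i) := Finset.prod_nonneg fun i _ => hYZn i
  have q1 : ∏ i : Fin N, margXY p (d.1 i) ≤ 1 :=
    Finset.prod_le_one (fun i _ => hXYn i) (fun i _ => (marg_bounds p hp hs _).2.1)
  have q2 : ∏ i : Fin N, margYZ p (d.2 i) ≤ 1 :=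
    Finset.prod_le_one (fun i _ => hYZn i) (fun i _ => (marg_bounds p hp hs _).2.2.2)
  exact ⟨mul_nonneg p1 p2, mul_le_one₀ q1 p2 q2⟩

/-- **Theorem 2 of the paper (total-variation version).**  For every `s ∈ [0,1]`,
every `N`, and every estimator `P̂` (an arbitrary function of the dataset valued in
distributions on Ω³), the worst-case probability over `P ∈ S(s)` that
`TV(P, P̂(D_N(P))) ≥ s/2` is at least `1/2`. -/
theorem memory_bottleneck_lower_bound_TV
    (s : ℝ) (hs : s ∈ Set.Icc (0 : ℝ) 1) (N : ℕ)
    (est : Dataset N → Dist3) :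
    (1 : ℝ) / 2 ≤
      sSup {r : ℝ | ∃ P ∈ Sclass s,
        r = dataEventProb P.1
              (fun d => s / 2 ≤ tvDist P.1 (est d).1)} := by
  obtain ⟨hs0, hs1⟩ := hs
  have habs : |s| ≤ 1 := by rw [abs_of_nonneg hs0]; exact hs1
  have habs' : |(-s)| ≤ 1 := by rw [abs_neg]; exact habs
  set Pp : Dist3 := ⟨pSig s, pSig_nonneg habs, pSig_sum s⟩ with hPpdef
  set Pm : Dist3 := ⟨pSig (-s), pSig_nonneg habs', pSig_sum (-s)⟩ with hPmdef
  have hPpS : Pp ∈ Sclass s := by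
    show cmiXZ_Y (pSig s) ≤ s
    rw [cmi_pSig]; exact key_ineq hs0 hs1
  have hPmS : Pm ∈ Sclass s := by
    show cmiXZ_Y (pSig (-s)) ≤ s
    rw [cmi_pSig]
    have h := key_ineq hs0 hs1
    have e1 : (1 + -s : ℝ) = 1 - s := by ring
    have e2 : (1 - -s : ℝ) = 1 + s := by ring
    rw [e1, e2]; linarith
  have hbdd : BddAbove {r : ℝ | ∃ P ∈ Sclass s,
      r = dataEventProb P.1 (fun d => s / 2 ≤ tvDist P.1 (est d).1)} := by
    refine ⟨(Fintype.card (Dataset N) : ℝ), ?_⟩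
    rintro r ⟨P, _, rfl⟩
    unfold dataEventProb
    calc (∑ d : Dataset N, if s / 2 ≤ tvDist P.1 (est d).1 then dataProb P.1 d else 0)
        ≤ ∑ _d : Dataset N, (1 : ℝ) := by
          refine Finset.sum_le_sum fun d _ => ?_
          split
          · exact (dataProb_bounds P.1 P.2.1 P.2.2 d).2
          · norm_num
      _ = _ := by rw [Finset.sum_const, Finset.card_univ, nsmul_eq_mul, mul_one]
  set a := dataEventProb (pSig s) (fun d : Dataset N => s/2 ≤ tvDist (pSig s) (est d).1) with hadef
  set b := dataEventProb (pSig (-s)) (fun d : Dataset N => s/2 ≤ tvDist (pSig (-s)) (est d).1) with hbdef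
  have ha_mem : a ∈ {r : ℝ | ∃ P ∈ Sclass s,
      r = dataEventProb P.1 (fun d => s / 2 ≤ tvDist P.1 (est d).1)} := ⟨Pp, hPpS, rfl⟩
  have hb_mem : b ∈ {r : ℝ | ∃ P ∈ Sclass s,
      r = dataEventProb P.1 (fun d => s / 2 ≤ tvDist P.1 (est d).1)} := ⟨Pm, hPmS, rfl⟩
  have hab : 1 ≤ a + b := by
    have hd : ∀ d : Dataset N,
        (s/2 ≤ tvDist (pSig s) (est d).1) ∨ (s/2 ≤ tvDist (pSig (-s)) (est d).1) := by
      intro d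
      by_contra hcon
      push_neg at hcon
      have htri := tv_triangle (pSig s) (est d).1 (pSig (-s))
      rw [tv_pm hs0, tv_symm (est d).1 (pSig (-s))] at htri
      linarith [hcon.1, hcon.2]
    have heq : ∀ d : Dataset N, dataProb (pSig (-s)) d = dataProb (pSig s) d := by
      intro d; rw [dataProb_pSig, dataProb_pSig]
    have hpt : ∀ d : Dataset N, dataProb (pSig s) d ≤
        (if s/2 ≤ tvDist (pSig s) (est d).1 then dataProb (pSig s) d else 0) +
        (if s/2 ≤ tvDist (pSig (-s)) (est d).1 then dataProb (pSig (-s)) d else 0) := by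
      intro d
      have hnn : 0 ≤ dataProb (pSig s) d :=
        (dataProb_bounds _ (pSig_nonneg habs) (pSig_sum s) d).1
      rcases hd d with h | h
      · rw [if_pos h]; split
        · rw [heq d]; linarith
        · linarith
      · rw [if_pos h, heq d]; split <;> linarith
    have hsum := Finset.sum_le_sum (fun d (_ : d ∈ Finset.univ) => hpt d)
    rw [sum_dataProb_pSig, Finset.sum_add_distrib] at hsum
    rw [hadef, hbdef]
    unfold dataEventProb
    exact hsum
  rcases le_or_gt (1/2 : ℝ) a with h | h
  · exact le_trans h (le_csSup hbdd ha_mem)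
  · exact le_trans (by linarith : (1:ℝ)/2 ≤ b) (le_csSup hbdd hb_mem)

end
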